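/- arXiv:1304.2078 — 2 statements merged into one kernel-verified Lean document; each statement's English description precedes it below -/
import Mathlib

section
/- Let f : X → Y be a homeomorphism between metric spaces that is η-quasisymmetric, i.e., there is a homeomorphism η : [0,∞) → [0,∞) with d_Y(f x, f y)/d_Y(f x, f z) ≤ η(d_X(x,y)/d_X(x,z)) for all x, y, z with x ≠ z. Then f is quasi-Möbius: there exists a homeomorphism η' : [0,∞) → [0,∞) such that for all 4-tuples (x₁,x₂,x₃,x₄) of distinct points, the metric cross-ratio satisfies [f x₁, f x₂, f x₃, f x₄] ≤ η'([x₁,x₂,x₃,x₄]). -/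
open NNReal
/-- A homeomorphism `f` between metric spaces is `η`-quasisymmetric (with
`η : [0,∞) → [0,∞)` a homeomorphism) if
`d(f x, f y)/d(f x, f z) ≤ η (d(x,y)/d(x,z))` for all `x, y, z` with `x ≠ z`. -/
def IsQuasisymmetricWith {X Y : Type*} [MetricSpace X] [MetricSpace Y]
    (η : ℝ≥0 ≃ₜ ℝ≥0) (f : X → Y) : Prop :=
  ∀ x y z : X, x ≠ z →
    nndist (f x) (f y) ≤ η (nndist x y / nndist x z) * nndist (f x) (f z)

/-- The metric cross-ratio `[x₁,x₂,x₃,x₄] = (d(x₁,x₃) d(x₂,x₄))/(d(x₁,x₄) d(x₂,x₃))`. -/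
noncomputable def metricCrossRatio {X : Type*} [MetricSpace X] (x₁ x₂ x₃ x₄ : X) : ℝ≥0 :=
  nndist x₁ x₃ * nndist x₂ x₄ / (nndist x₁ x₄ * nndist x₂ x₃)

/-- The purely arithmetic core of the quasisymmetric ⇒ quasi-Möbius argument. -/
private lemma qm_arith (η : ℝ≥0 → ℝ≥0) (hm : Monotone η)
    (p q r s n P Q R S T : ℝ≥0)
    (hr : r ≠ 0) (hs : s ≠ 0)
    (hpq : p ≤ q) (hrs : r ≤ s)
    (hP : P ≤ η (p / r) * R)
    (hQ : Q ≤ η (q / s) * S)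
    (hT : T ≤ η (n / s) * S)
    (hQt : Q ≤ S + T)
    (hn : n ≤ p + r)
    (hsqn : s ≤ q + n) :
    P * Q ≤ (1 + η 1 + η 2) *
      (η (4 * (p * q / (r * s))) + η (4 * (p * q / (r * s))) ^ 2
        + η (NNReal.sqrt (p * q / (r * s)))) * (R * S) := by
  have hr0 : 0 < r := zero_lt_iff.2 hr
  have hs0 : 0 < s := zero_lt_iff.2 hs
  have hrs0 : 0 < r * s := mul_pos hr0 hs0
  set t := p * q / (r * s) with ht
  set K := η (4 * t) with hK
  set C := 1 + η 1 + η 2 with hC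
  set I := K + K ^ 2 + η (NNReal.sqrt t) with hI
  have hη1C : η 1 ≤ C := le_add_self.trans le_self_add
  have h1C : (1 : ℝ≥0) ≤ C := le_self_add.trans le_self_add
  have hKI : K ≤ I := le_self_add.trans le_self_add
  have hsI : η (NNReal.sqrt t) ≤ I := le_add_self
  have key : ∀ k : ℝ≥0, s ≤ k * q → p / r ≤ k * t := by
    intro k hk
    rw [ht, show k * (p * q / (r * s)) = k * (p * q) / (r * s) from
      (mul_div_assoc _ _ _).symm, div_le_div_iff₀ hr0 hrs0]
    calc p * (r * s) = p * r * s := by ring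
      _ ≤ p * r * (k * q) := mul_le_mul_right hk _
      _ = k * (p * q) * r := by ring
  rcases le_total s q with hsq | hqs
  · -- `s ≤ q`
    have hpr4 : p / r ≤ 4 * t := by
      have h1 : p / r ≤ 1 * t := key 1 (by rw [one_mul]; exact hsq)
      rw [one_mul] at h1
      exact h1.trans (le_mul_of_one_le_left zero_le (by norm_num))
    have hP' : P ≤ K * R := hP.trans (mul_le_mul_left (hm hpr4) R)
    have hns : η (n / s) ≤ η 2 + K := by
      rcases le_total p r with hpr | hrp
      · refine le_trans (hm ?_) le_self_add
        rw [div_le_iff₀ (pos_iff_ne_zero.2 hs)]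
        calc n ≤ p + r := hn
          _ ≤ r + r := add_le_add_left hpr r
          _ ≤ s + s := add_le_add hrs hrs
          _ = 2 * s := (two_mul s).symm
      · refine le_trans (hm ?_) le_add_self
        have hps : p / s ≤ t := by
          rw [ht, div_le_div_iff₀ hs0 hrs0]
          calc p * (r * s) = p * s * r := by ring
            _ ≤ p * s * q := mul_le_mul_right (hrs.trans hsq) _
            _ = p * q * s := by ring
        have h2p : n ≤ 2 * p := by
          calc n ≤ p + r := hn
            _ ≤ p + p := add_le_add_right hrp p
            _ = 2 * p := (two_mul p).symm
        calc n / s ≤ (2 * p) / s := by gcongr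
          _ = 2 * (p / s) := mul_div_assoc _ _ _
          _ ≤ 2 * t := mul_le_mul_right hps 2
          _ ≤ 4 * t := mul_le_mul_left (by norm_num) t
    have hQ' : Q ≤ (1 + (η 2 + K)) * S := by
      calc Q ≤ S + T := hQt
        _ ≤ S + η (n / s) * S := add_le_add_right hT S
        _ ≤ S + (η 2 + K) * S := add_le_add_right (mul_le_mul_left hns S) S
        _ = (1 + (η 2 + K)) * S := by ring
    calc P * Q ≤ (K * R) * ((1 + (η 2 + K)) * S) := mul_le_mul' hP' hQ'
      _ = ((1 + η 2) * K + 1 * K ^ 2) * (R * S) := by ring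
      _ ≤ (C * K + C * K ^ 2) * (R * S) := by
          refine mul_le_mul_left (add_le_add ?_ ?_) _
          · exact mul_le_mul_left (add_le_add_left le_self_add _) K
          · exact mul_le_mul_left h1C _
      _ = (C * (K + K ^ 2)) * (R * S) := by ring
      _ ≤ C * I * (R * S) := mul_le_mul_left (mul_le_mul_right le_self_add C) _
  · -- `q ≤ s`
    rcases le_total r p with hrp | hpr
    · -- `r ≤ p` : here `s ≤ 4q`
      have hs4q : s ≤ 4 * q := by
        rcases le_total (4 * p) s with h4 | h4
        · have h2p : n ≤ 2 * p := by
            calc n ≤ p + r := hn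
              _ ≤ p + p := add_le_add_right hrp p
              _ = 2 * p := (two_mul p).symm
          have h2s : 2 * s ≤ 2 * q + s := by
            calc 2 * s ≤ 2 * (q + n) := mul_le_mul_right hsqn 2
              _ = 2 * q + 2 * n := by ring
              _ ≤ 2 * q + 4 * p := by
                  refine add_le_add_right ?_ _
                  calc 2 * n ≤ 2 * (2 * p) := mul_le_mul_right h2p 2
                    _ = 4 * p := by ring
              _ ≤ 2 * q + s := add_le_add_right h4 _
          have hs2q : s ≤ 2 * q := by
            rw [two_mul] at h2s
            exact (add_le_add_iff_right s).1 h2s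
          exact hs2q.trans (mul_le_mul_left (by norm_num) q)
        · exact h4.trans (mul_le_mul_right hpq 4)
      have hpr4 : p / r ≤ 4 * t := key 4 hs4q
      have hqs1 : q / s ≤ 1 := (div_le_one hs0).2 hqs
      calc P * Q ≤ (η (p / r) * R) * (η (q / s) * S) := mul_le_mul' hP hQ
        _ = (η (p / r) * η (q / s)) * (R * S) := by ring
        _ ≤ (K * η 1) * (R * S) :=
            mul_le_mul_left (mul_le_mul' (hm hpr4) (hm hqs1)) _
        _ ≤ C * I * (R * S) := by
            refine mul_le_mul_left ?_ _
            rw [mul_comm]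
            exact mul_le_mul' hη1C hKI
    · -- `p ≤ r` and `q ≤ s`
      have hprod : (p / r) * (q / s) = t := by rw [ht]; exact div_mul_div_comm p r q s
      have hq1 : q / s ≤ 1 := (div_le_one hs0).2 hqs
      have hp1 : p / r ≤ 1 := (div_le_one hr0).2 hpr
      rcases le_total (p / r) (q / s) with hle | hle
      · have hsqrt : p / r ≤ NNReal.sqrt t := by
          rw [NNReal.le_sqrt_iff_sq_le]
          calc (p / r) ^ 2 = (p / r) * (p / r) := sq _
            _ ≤ (p / r) * (q / s) := mul_le_mul_right hle _
            _ = t := hprod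
        calc P * Q ≤ (η (p / r) * R) * (η (q / s) * S) := mul_le_mul' hP hQ
          _ = (η (p / r) * η (q / s)) * (R * S) := by ring
          _ ≤ (η (NNReal.sqrt t) * η 1) * (R * S) :=
              mul_le_mul_left (mul_le_mul' (hm hsqrt) (hm hq1)) _
          _ ≤ C * I * (R * S) := by
              refine mul_le_mul_left ?_ _
              rw [mul_comm]
              exact mul_le_mul' hη1C hsI
      · have hsqrt : q / s ≤ NNReal.sqrt t := by
          rw [NNReal.le_sqrt_iff_sq_le]
          calc (q / s) ^ 2 = (q / s) * (q / s) := sq _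
            _ ≤ (p / r) * (q / s) := mul_le_mul_left hle _
            _ = t := hprod
        calc P * Q ≤ (η (p / r) * R) * (η (q / s) * S) := mul_le_mul' hP hQ
          _ = (η (p / r) * η (q / s)) * (R * S) := by ring
          _ ≤ (η 1 * η (NNReal.sqrt t)) * (R * S) :=
              mul_le_mul_left (mul_le_mul' (hm hp1) (hm hsqrt)) _
          _ ≤ C * I * (R * S) :=
              mul_le_mul_left (mul_le_mul' hη1C hsI) _

private lemma qm_metric {X Y : Type*} [MetricSpace X] [MetricSpace Y]
    (f : X ≃ₜ Y) (η : ℝ≥0 ≃ₜ ℝ≥0) (hf : IsQuasisymmetricWith η f) (hm : Monotone η)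
    (x₁ x₂ x₃ x₄ : X) (h14 : x₁ ≠ x₄) (h23 : x₂ ≠ x₃)
    (hpq : nndist x₁ x₃ ≤ nndist x₂ x₄) (hrs : nndist x₁ x₄ ≤ nndist x₂ x₃) :
    metricCrossRatio (f x₁) (f x₂) (f x₃) (f x₄) ≤
      (1 + η 1 + η 2) * (η (4 * metricCrossRatio x₁ x₂ x₃ x₄)
        + η (4 * metricCrossRatio x₁ x₂ x₃ x₄) ^ 2
        + η (NNReal.sqrt (metricCrossRatio x₁ x₂ x₃ x₄))) := by
  have hr : nndist x₁ x₄ ≠ 0 := by simpa using h14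
  have hs : nndist x₂ x₃ ≠ 0 := by simpa using h23
  have hR : nndist (f x₁) (f x₄) ≠ 0 := by simpa using f.injective.ne h14
  have hS : nndist (f x₂) (f x₃) ≠ 0 := by simpa using f.injective.ne h23
  have hP := hf x₁ x₃ x₄ h14
  have hQ := hf x₂ x₄ x₃ h23
  have hT := hf x₃ x₄ x₂ (Ne.symm h23)
  rw [nndist_comm x₃ x₂, nndist_comm (f x₃) (f x₂)] at hT
  have hQt := nndist_triangle (f x₂) (f x₃) (f x₄)
  have hn : nndist x₃ x₄ ≤ nndist x₁ x₃ + nndist x₁ x₄ := by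
    rw [nndist_comm x₁ x₃]; exact nndist_triangle x₃ x₁ x₄
  have hsqn : nndist x₂ x₃ ≤ nndist x₂ x₄ + nndist x₃ x₄ := by
    rw [nndist_comm x₃ x₄]; exact nndist_triangle x₂ x₄ x₃
  have h := qm_arith η hm (nndist x₁ x₃) (nndist x₂ x₄) (nndist x₁ x₄) (nndist x₂ x₃)
    (nndist x₃ x₄) (nndist (f x₁) (f x₃)) (nndist (f x₂) (f x₄)) (nndist (f x₁) (f x₄))
    (nndist (f x₂) (f x₃)) (nndist (f x₃) (f x₄)) hr hs hpq hrs hP hQ hT hQt hn hsqn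
  unfold metricCrossRatio
  rw [div_le_iff₀ (pos_iff_ne_zero.2 (mul_ne_zero hR hS))]
  exact h

private lemma cr_swap12 {X : Type*} [MetricSpace X] (x₁ x₂ x₃ x₄ : X) :
    metricCrossRatio x₂ x₁ x₄ x₃ = metricCrossRatio x₁ x₂ x₃ x₄ := by
  unfold metricCrossRatio
  rw [mul_comm (nndist x₂ x₄), mul_comm (nndist x₂ x₃)]

private lemma cr_swap_rs {X : Type*} [MetricSpace X] (x₁ x₂ x₃ x₄ : X) :
    metricCrossRatio x₃ x₄ x₁ x₂ = metricCrossRatio x₁ x₂ x₃ x₄ := by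
  unfold metricCrossRatio
  rw [nndist_comm x₃ x₁, nndist_comm x₄ x₂, nndist_comm x₃ x₂, nndist_comm x₄ x₁,
    mul_comm (nndist x₂ x₃) (nndist x₁ x₄)]

private lemma cr_swap_pq {X : Type*} [MetricSpace X] (x₁ x₂ x₃ x₄ : X) :
    metricCrossRatio x₄ x₃ x₂ x₁ = metricCrossRatio x₁ x₂ x₃ x₄ := by
  unfold metricCrossRatio
  rw [nndist_comm x₄ x₂, nndist_comm x₃ x₁, nndist_comm x₄ x₁, nndist_comm x₃ x₂,
    mul_comm (nndist x₂ x₄) (nndist x₁ x₃)]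

/-- Every quasisymmetric homeomorphism between metric spaces is
quasi-Möbius: there is a homeomorphism `η' : [0,∞) → [0,∞)` controlling the
distortion of metric cross-ratios of 4-tuples of distinct points. -/
theorem quasisymmetric_is_quasiMoebius {X Y : Type*} [MetricSpace X] [MetricSpace Y]
    (f : X ≃ₜ Y) (η : ℝ≥0 ≃ₜ ℝ≥0) (hf : IsQuasisymmetricWith η f) :
    ∃ η' : ℝ≥0 ≃ₜ ℝ≥0, ∀ x₁ x₂ x₃ x₄ : X,
      x₁ ≠ x₂ → x₁ ≠ x₃ → x₁ ≠ x₄ → x₂ ≠ x₃ → x₂ ≠ x₄ → x₃ ≠ x₄ →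
      metricCrossRatio (f x₁) (f x₂) (f x₃) (f x₄) ≤
        η' (metricCrossRatio x₁ x₂ x₃ x₄) := by
  have hmono : StrictMono (⇑η) := by
    rcases η.continuous.strictMono_of_inj η.injective with h | h
    · exact h
    · exfalso
      obtain ⟨x, hx⟩ := η.surjective (η 0 + 1)
      rcases eq_or_lt_of_le (zero_le : (0:ℝ≥0) ≤ x) with heq | hx0
      · rw [← heq] at hx
        simp at hx
      · have hlt := h hx0
        rw [hx] at hlt
        exact (le_self_add : η 0 ≤ η 0 + 1).not_gt hlt
  have hm : Monotone ⇑η := hmono.monotone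
  have hη0 : η 0 = 0 := by
    obtain ⟨x, hx⟩ := η.surjective 0
    refine le_antisymm ?_ zero_le
    calc η 0 ≤ η x := hm (zero_le : (0:ℝ≥0) ≤ x)
      _ = 0 := hx
  set C := 1 + η 1 + η 2 with hC
  set g : ℝ≥0 → ℝ≥0 :=
    fun t => C * (η (4 * t) + η (4 * t) ^ 2 + η (NNReal.sqrt t)) + t with hg
  have hgmono : StrictMono g := by
    intro a b hab
    have h4 : η (4 * a) ≤ η (4 * b) := hm (mul_le_mul_right hab.le 4)
    have hsq : η (NNReal.sqrt a) ≤ η (NNReal.sqrt b) :=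
      hm (NNReal.sqrt_le_sqrt.2 hab.le)
    have hB : C * (η (4 * a) + η (4 * a) ^ 2 + η (NNReal.sqrt a))
        ≤ C * (η (4 * b) + η (4 * b) ^ 2 + η (NNReal.sqrt b)) :=
      mul_le_mul_right
        (add_le_add (add_le_add h4 (pow_le_pow_left₀ zero_le h4 2)) hsq) C
    exact add_lt_add_of_le_of_lt hB hab
  have hgcont : Continuous g := by
    have h1 : Continuous fun t : ℝ≥0 => η (4 * t) :=
      η.continuous.comp (continuous_const.mul continuous_id)
    have h2 : Continuous fun t : ℝ≥0 => η (NNReal.sqrt t) :=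
      η.continuous.comp NNReal.continuous_sqrt
    exact ((continuous_const.mul ((h1.add (h1.pow 2)).add h2)).add continuous_id)
  have hg0 : g 0 = 0 := by simp [hg, hη0]
  have hgsurj : Function.Surjective g := by
    intro y
    have hy : y ≤ g y := by rw [hg]; exact le_add_self
    obtain ⟨x, -, hgx⟩ := intermediate_value_Icc (zero_le : (0:ℝ≥0) ≤ y) hgcont.continuousOn
      ⟨by rw [hg0]; exact zero_le, hy⟩
    exact ⟨x, hgx⟩
  set e := StrictMono.orderIsoOfSurjective g hgmono hgsurj with he
  refine ⟨e.toHomeomorph, ?_⟩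
  have hcoe : ∀ t, e.toHomeomorph t = g t := fun t => rfl
  have main : ∀ y₁ y₂ y₃ y₄ : X, y₁ ≠ y₄ → y₂ ≠ y₃ →
      nndist y₁ y₃ ≤ nndist y₂ y₄ → nndist y₁ y₄ ≤ nndist y₂ y₃ →
      metricCrossRatio (f y₁) (f y₂) (f y₃) (f y₄) ≤
        e.toHomeomorph (metricCrossRatio y₁ y₂ y₃ y₄) := by
    intro y₁ y₂ y₃ y₄ h14 h23 hpq hrs
    rw [hcoe]
    calc metricCrossRatio (f y₁) (f y₂) (f y₃) (f y₄)
        ≤ C * (η (4 * metricCrossRatio y₁ y₂ y₃ y₄)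
            + η (4 * metricCrossRatio y₁ y₂ y₃ y₄) ^ 2
            + η (NNReal.sqrt (metricCrossRatio y₁ y₂ y₃ y₄))) :=
          qm_metric f η hf hm y₁ y₂ y₃ y₄ h14 h23 hpq hrs
      _ ≤ g (metricCrossRatio y₁ y₂ y₃ y₄) := by rw [hg]; exact le_self_add
  intro x₁ x₂ x₃ x₄ h12 h13 h14 h23 h24 h34
  rcases le_total (nndist x₁ x₃) (nndist x₂ x₄) with hpq | hpq <;>
    rcases le_total (nndist x₁ x₄) (nndist x₂ x₃) with hrs | hrs
  · exact main x₁ x₂ x₃ x₄ h14 h23 hpq hrs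
  · have h := main x₃ x₄ x₁ x₂ (Ne.symm h23) (Ne.symm h14)
      (by rw [nndist_comm x₃ x₁, nndist_comm x₄ x₂]; exact hpq)
      (by rw [nndist_comm x₃ x₂, nndist_comm x₄ x₁]; exact hrs)
    rwa [cr_swap_rs (f x₁) (f x₂) (f x₃) (f x₄), cr_swap_rs x₁ x₂ x₃ x₄] at h
  · have h := main x₄ x₃ x₂ x₁ (Ne.symm h14) (Ne.symm h23)
      (by rw [nndist_comm x₄ x₂, nndist_comm x₃ x₁]; exact hpq)
      (by rw [nndist_comm x₄ x₁, nndist_comm x₃ x₂]; exact hrs)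
    rwa [cr_swap_pq (f x₁) (f x₂) (f x₃) (f x₄), cr_swap_pq x₁ x₂ x₃ x₄] at h
  · have h := main x₂ x₁ x₄ x₃ h23 h14 hpq hrs
    rwa [cr_swap12 (f x₁) (f x₂) (f x₃) (f x₄), cr_swap12 x₁ x₂ x₃ x₄] at h
end

section
/- For any two distinct peripheral squares C₁, C₂ of F_{n,p} (boundaries of removed open squares), the Euclidean distance satisfies dist(C₁, C₂) ≥ min{ℓ(C₁), ℓ(C₂)}, where ℓ(Cᵢ) denotes the Euclidean side length of the square Cᵢ. Consequently dist(C₁,C₂) ≥ (1/√2) min{diam(C₁), diam(C₂)}, so the peripheral circles of F_{n,p} are uniformly relatively separated with constant δ = 1/√2. -/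
open Set ENNReal

noncomputable section

/-- The closed unit square `[0,1] × [0,1]` in the plane `ℂ`. -/
def sq01 : Set ℂ := {z : ℂ | z.re ∈ Set.Icc (0 : ℝ) 1 ∧ z.im ∈ Set.Icc (0 : ℝ) 1}

/-- The similarity of ratio `1/n` sending the unit square onto the `(i,j)`-th
subsquare of side `1/n` in the subdivision of the unit square into `n²` subsquares. -/
def Tmap (n : ℕ) (ij : ℕ × ℕ) (z : ℂ) : ℂ :=
  (z + (ij.1 : ℂ) + (ij.2 : ℂ) * Complex.I) / (n : ℂ)

/-- The set of grid positions of the subsquares that survive one subdivision step: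
all `n²` positions except the four removed squares, each of which has its lower-left
corner at distance `√2·p/n` from one of the four corners of the unit square, along
the corresponding diagonal. -/
def keepSet (n p : ℕ) : Set (ℕ × ℕ) :=
  {ij | ij.1 < n ∧ ij.2 < n ∧
    ij ∉ ({(p, p), (n - 1 - p, p), (p, n - 1 - p), (n - 1 - p, n - 1 - p)} : Set (ℕ × ℕ))}

/-- The sets `Q^{(k)}_{n,p}` of the inductive construction: `Q⁽⁰⁾` is the unit
square, and `Q^{(k+1)}` is obtained by subdividing each surviving square into `n²`
subsquares of equal side and removing the interiors of the four subsquares at the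
positions excluded by `keepSet`. -/
def Qset (n p : ℕ) : ℕ → Set ℂ
  | 0 => sq01
  | k + 1 => ⋃ ij ∈ keepSet n p, Tmap n ij '' Qset n p k

/-- The Sierpiński carpet `F_{n,p} = ⋂_k Q^{(k)}_{n,p}`. -/
def carpetF (n p : ℕ) : Set ℂ := ⋂ k, Qset n p k

/-- The closed squares removed at generation `k+1` of the construction of `F_{n,p}`:
at generation one (`k = 0`) the four squares `M̄₁, M̄₂, M̄₃, M̄₄` of side `1/n`,
and at each later generation the images of the previous ones under the similarities
onto surviving subsquares. Each square in `removedSq n p k` has side `1/n^{k+1}`. -/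
def removedSq (n p : ℕ) : ℕ → Set (Set ℂ)
  | 0 => {Tmap n (p, p) '' sq01, Tmap n (n - 1 - p, p) '' sq01,
          Tmap n (p, n - 1 - p) '' sq01, Tmap n (n - 1 - p, n - 1 - p) '' sq01}
  | k + 1 => {C | ∃ ij ∈ keepSet n p, ∃ C₀ ∈ removedSq n p k, C = Tmap n ij '' C₀}


/-- The (Euclidean) distance between two subsets of the plane, as an extended real. -/
def setEDist (A B : Set ℂ) : ℝ≥0∞ := ⨅ (a : A) (b : B), edist (a : ℂ) (b : ℂ)

namespace CarpetSep

lemma tmap_re (n : ℕ) (ij : ℕ × ℕ) (z : ℂ) :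
    (Tmap n ij z).re = (z.re + ij.1) / n := by
  rw [Tmap, show ((n:ℕ):ℂ) = (((n:ℕ):ℝ):ℂ) from (Complex.ofReal_natCast n).symm,
    Complex.div_ofReal_re]
  simp

lemma tmap_im (n : ℕ) (ij : ℕ × ℕ) (z : ℂ) :
    (Tmap n ij z).im = (z.im + ij.2) / n := by
  rw [Tmap, show ((n:ℕ):ℂ) = (((n:ℕ):ℝ):ℂ) from (Complex.ofReal_natCast n).symm,
    Complex.div_ofReal_im]
  simp

lemma tmap_dist (n : ℕ) (ij : ℕ × ℕ) (a b : ℂ) :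
    dist (Tmap n ij a) (Tmap n ij b) = dist a b / n := by
  have h : Tmap n ij a - Tmap n ij b = (a - b) / (n : ℂ) := by
    rw [Tmap, Tmap]; ring
  rw [Complex.dist_eq, h, norm_div, Complex.norm_natCast, ← Complex.dist_eq]

lemma tmap_inj {n : ℕ} (hn : n ≠ 0) (ij : ℕ × ℕ) : Function.Injective (Tmap n ij) := by
  intro a b h
  have hN : (n : ℂ) ≠ 0 := Nat.cast_ne_zero.mpr hn
  rw [Tmap, Tmap, div_eq_div_iff hN hN] at h
  have := mul_right_cancel₀ hN h
  simpa using this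

lemma abs_re_sub_le_dist (z w : ℂ) : |z.re - w.re| ≤ dist z w := by
  rw [Complex.dist_eq]
  simpa [Complex.sub_re] using Complex.abs_re_le_norm (z - w)

lemma abs_im_sub_le_dist (z w : ℂ) : |z.im - w.im| ≤ dist z w := by
  rw [Complex.dist_eq]
  simpa [Complex.sub_im] using Complex.abs_im_le_norm (z - w)

lemma oneD {N m₁ m₂ : ℝ} (hN : 0 < N) {a₁ a₂ : ℕ} {x₁ x₂ : ℝ}
    (h1 : x₁ ≤ ((a₁:ℝ) + 1 - m₁) / N) (h2 : ((a₂:ℝ) + m₂) / N ≤ x₂) :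
    ((a₂:ℝ) - a₁ - 1 + m₁ + m₂) / N ≤ x₂ - x₁ := by
  rw [div_le_iff₀ hN]
  have h1' : x₁ * N ≤ (a₁:ℝ) + 1 - m₁ := by rwa [← le_div_iff₀ hN]
  have h2' : (a₂:ℝ) + m₂ ≤ x₂ * N := by rwa [← div_le_iff₀ hN]
  nlinarith

/-- separation in one coordinate: cells differ, margins `m₁ m₂`. -/
lemma sep_coord {N m₁ m₂ : ℝ} (hN : 0 < N) (hm₁ : 0 ≤ m₁) (hm₂ : 0 ≤ m₂)
    {a₁ a₂ : ℕ} {x₁ x₂ D : ℝ} (hd : |x₁ - x₂| ≤ D)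
    (hz1 : ((a₁:ℝ) + m₁) / N ≤ x₁) (hz2 : x₁ ≤ ((a₁:ℝ) + 1 - m₁) / N)
    (hw1 : ((a₂:ℝ) + m₂) / N ≤ x₂) (hw2 : x₂ ≤ ((a₂:ℝ) + 1 - m₂) / N)
    (hne : a₁ ≠ a₂) : (m₁ + m₂) / N ≤ D := by
  rcases hne.lt_or_gt with h | h
  · have ha : (a₁:ℝ) + 1 ≤ a₂ := by exact_mod_cast h
    have h0 := oneD hN hz2 hw1
    have hmono : (m₁ + m₂) / N ≤ ((a₂:ℝ) - a₁ - 1 + m₁ + m₂) / N :=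
      (div_le_div_iff_of_pos_right hN).mpr (by linarith)
    have := neg_le_abs (x₁ - x₂)
    linarith
  · have ha : (a₂:ℝ) + 1 ≤ a₁ := by exact_mod_cast h
    have h0 := oneD hN hw2 hz1
    have hmono : (m₁ + m₂) / N ≤ ((a₁:ℝ) - a₂ - 1 + m₂ + m₁) / N :=
      (div_le_div_iff_of_pos_right hN).mpr (by linarith)
    have := le_abs_self (x₁ - x₂)
    linarith

/-- separation in one coordinate: cells differ by at least 2, no margins. -/
lemma sep_coord2 {N : ℝ} (hN : 0 < N) {a₁ a₂ : ℕ} {x₁ x₂ D : ℝ} (hd : |x₁ - x₂| ≤ D)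
    (hz1 : (a₁:ℝ) / N ≤ x₁) (hz2 : x₁ ≤ ((a₁:ℝ) + 1) / N)
    (hw1 : (a₂:ℝ) / N ≤ x₂) (hw2 : x₂ ≤ ((a₂:ℝ) + 1) / N)
    (hgap : a₁ + 2 ≤ a₂ ∨ a₂ + 2 ≤ a₁) : 1 / N ≤ D := by
  have e (a : ℕ) : ((a:ℝ)) / N = ((a:ℝ) + 0) / N := by ring_nf
  have e' (a : ℕ) : ((a:ℝ) + 1) / N = ((a:ℝ) + 1 - 0) / N := by ring_nf
  rcases hgap with h | h
  · have ha : (a₁:ℝ) + 2 ≤ a₂ := by exact_mod_cast h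
    have h0 := oneD (N := N) (m₁ := (0:ℝ)) (m₂ := (0:ℝ)) (a₁ := a₁) (a₂ := a₂) hN
      (by simpa using hz2) (by simpa using hw1)
    have hmono : 1 / N ≤ ((a₂:ℝ) - a₁ - 1 + 0 + 0) / N :=
      (div_le_div_iff_of_pos_right hN).mpr (by linarith)
    have := neg_le_abs (x₁ - x₂)
    linarith
  · have ha : (a₂:ℝ) + 2 ≤ a₁ := by exact_mod_cast h
    have h0 := oneD (N := N) (m₁ := (0:ℝ)) (m₂ := (0:ℝ)) (a₁ := a₂) (a₂ := a₁) hN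
      (by simpa using hw2) (by simpa using hz1)
    have hmono : 1 / N ≤ ((a₁:ℝ) - a₂ - 1 + 0 + 0) / N :=
      (div_le_div_iff_of_pos_right hN).mpr (by linarith)
    have := le_abs_self (x₁ - x₂)
    linarith


lemma mem_removedSq_zero {n p : ℕ} {S : Set ℂ} (h : S ∈ removedSq n p 0) :
    ∃ c : ℕ × ℕ,
      (c = (p, p) ∨ c = (n - 1 - p, p) ∨ c = (p, n - 1 - p) ∨ c = (n - 1 - p, n - 1 - p)) ∧
      S = Tmap n c '' sq01 := by
  simp only [removedSq, Set.mem_insert_iff, Set.mem_singleton_iff] at h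
  rcases h with h | h | h | h
  · exact ⟨(p, p), Or.inl rfl, h⟩
  · exact ⟨(n - 1 - p, p), Or.inr (Or.inl rfl), h⟩
  · exact ⟨(p, n - 1 - p), Or.inr (Or.inr (Or.inl rfl)), h⟩
  · exact ⟨(n - 1 - p, n - 1 - p), Or.inr (Or.inr (Or.inr rfl)), h⟩

lemma cell_bounds {n : ℕ} (hN : (0:ℝ) < n) (ij : ℕ × ℕ) {w : ℂ} {m : ℝ}
    (h : m ≤ w.re ∧ w.re ≤ 1 - m ∧ m ≤ w.im ∧ w.im ≤ 1 - m) :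
    ((ij.1:ℝ) + m) / n ≤ (Tmap n ij w).re ∧ (Tmap n ij w).re ≤ ((ij.1:ℝ) + 1 - m) / n ∧
    ((ij.2:ℝ) + m) / n ≤ (Tmap n ij w).im ∧ (Tmap n ij w).im ≤ ((ij.2:ℝ) + 1 - m) / n := by
  rw [tmap_re, tmap_im]
  obtain ⟨h1, h2, h3, h4⟩ := h
  exact ⟨(div_le_div_iff_of_pos_right hN).mpr (by linarith),
    (div_le_div_iff_of_pos_right hN).mpr (by linarith),
    (div_le_div_iff_of_pos_right hN).mpr (by linarith),
    (div_le_div_iff_of_pos_right hN).mpr (by linarith)⟩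

lemma sq01_bounds {w : ℂ} (hw : w ∈ sq01) :
    (0:ℝ) ≤ w.re ∧ w.re ≤ 1 - 0 ∧ (0:ℝ) ≤ w.im ∧ w.im ≤ 1 - 0 :=
  ⟨hw.1.1, by simpa using hw.1.2, hw.2.1, by simpa using hw.2.2⟩

lemma margin {n p : ℕ} (hn : 5 ≤ n) (hp : 1 ≤ p) (hpn : 2 * p + 2 < n) :
    ∀ k, ∀ S ∈ removedSq n p k, ∀ z ∈ S,
      1 / (n:ℝ) ^ (k + 1) ≤ z.re ∧ z.re ≤ 1 - 1 / (n:ℝ) ^ (k + 1) ∧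
      1 / (n:ℝ) ^ (k + 1) ≤ z.im ∧ z.im ≤ 1 - 1 / (n:ℝ) ^ (k + 1) := by
  have hN : (0:ℝ) < n := by exact_mod_cast (by omega : 0 < n)
  intro k
  induction k with
  | zero =>
    intro S hS z hz
    obtain ⟨c, hc, rfl⟩ := mem_removedSq_zero hS
    obtain ⟨z', hz', rfl⟩ := hz
    have hc1 : 1 ≤ c.1 ∧ c.1 + 2 ≤ n ∧ 1 ≤ c.2 ∧ c.2 + 2 ≤ n := by
      rcases hc with rfl | rfl | rfl | rfl <;> simp <;> omega
    have hr1 : (1:ℝ) ≤ c.1 := by exact_mod_cast hc1.1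
    have hr2 : (c.1:ℝ) + 2 ≤ n := by exact_mod_cast hc1.2.1
    have hr3 : (1:ℝ) ≤ c.2 := by exact_mod_cast hc1.2.2.1
    have hr4 : (c.2:ℝ) + 2 ≤ n := by exact_mod_cast hc1.2.2.2
    have hz1 := hz'.1.1; have hz2 := hz'.1.2; have hz3 := hz'.2.1; have hz4 := hz'.2.2
    have hsub : (1:ℝ) - 1 / (n:ℝ) ^ (0 + 1) = ((n:ℝ) - 1) / n := by
      rw [pow_one]; field_simp
    have hone : (1:ℝ) / (n:ℝ) ^ (0 + 1) = 1 / n := by rw [pow_one]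
    rw [tmap_re, tmap_im, hsub, hone]
    exact ⟨(div_le_div_iff_of_pos_right hN).mpr (by linarith),
      (div_le_div_iff_of_pos_right hN).mpr (by linarith),
      (div_le_div_iff_of_pos_right hN).mpr (by linarith),
      (div_le_div_iff_of_pos_right hN).mpr (by linarith)⟩
  | succ k IH =>
    intro S hS z hz
    simp only [removedSq, Set.mem_setOf_eq] at hS
    obtain ⟨ij, hij, C₀, hC₀, rfl⟩ := hS
    obtain ⟨w, hw, rfl⟩ := hz
    obtain ⟨hm1, hm2, hm3, hm4⟩ := IH C₀ hC₀ w hw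
    have hpow : 1 / (n:ℝ) ^ (k + 1 + 1) = (1 / (n:ℝ) ^ (k + 1)) / n := by
      rw [pow_succ, ← div_div]
    have hi : (ij.1:ℝ) ≤ (n:ℝ) - 1 := by
      have : (ij.1:ℝ) + 1 ≤ n := by exact_mod_cast hij.1
      linarith
    have hj : (ij.2:ℝ) ≤ (n:ℝ) - 1 := by
      have : (ij.2:ℝ) + 1 ≤ n := by exact_mod_cast hij.2.1
      linarith
    have hi0 : (0:ℝ) ≤ ij.1 := Nat.cast_nonneg _
    have hj0 : (0:ℝ) ≤ ij.2 := Nat.cast_nonneg _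
    have hsub : (1:ℝ) - (1 / (n:ℝ) ^ (k + 1)) / n = ((n:ℝ) - 1 / (n:ℝ) ^ (k + 1)) / n := by
      field_simp
    rw [tmap_re, tmap_im, hpow, hsub]
    exact ⟨(div_le_div_iff_of_pos_right hN).mpr (by linarith),
      (div_le_div_iff_of_pos_right hN).mpr (by linarith),
      (div_le_div_iff_of_pos_right hN).mpr (by linarith),
      (div_le_div_iff_of_pos_right hN).mpr (by linarith)⟩

lemma sep00 {n p : ℕ} (hn : 5 ≤ n) (hp : 1 ≤ p) (hpn : 2 * p + 2 < n) {S₁ S₂ : Set ℂ}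
    (h₁ : S₁ ∈ removedSq n p 0) (h₂ : S₂ ∈ removedSq n p 0) (hne : S₁ ≠ S₂)
    {z w : ℂ} (hz : z ∈ S₁) (hw : w ∈ S₂) : 1 / (n:ℝ) ≤ dist z w := by
  have hN : (0:ℝ) < n := by exact_mod_cast (by omega : 0 < n)
  obtain ⟨c, hc, rfl⟩ := mem_removedSq_zero h₁
  obtain ⟨c', hc', rfl⟩ := mem_removedSq_zero h₂
  obtain ⟨z', hz', rfl⟩ := hz
  obtain ⟨w', hw', rfl⟩ := hw
  have hcc : c ≠ c' := by rintro rfl; exact hne rfl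
  have hb₁ := cell_bounds hN c (sq01_bounds hz')
  have hb₂ := cell_bounds hN c' (sq01_bounds hw')
  simp only [add_zero, sub_zero] at hb₁ hb₂
  have hv : (c.1 = p ∨ c.1 = n - 1 - p) ∧ (c.2 = p ∨ c.2 = n - 1 - p) := by
    rcases hc with rfl | rfl | rfl | rfl <;> simp
  have hv' : (c'.1 = p ∨ c'.1 = n - 1 - p) ∧ (c'.2 = p ∨ c'.2 = n - 1 - p) := by
    rcases hc' with rfl | rfl | rfl | rfl <;> simp
  have hcoord : c.1 ≠ c'.1 ∨ c.2 ≠ c'.2 := by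
    by_contra hcon; push_neg at hcon; exact hcc (Prod.ext hcon.1 hcon.2)
  rcases hcoord with h | h
  · have hgap : c.1 + 2 ≤ c'.1 ∨ c'.1 + 2 ≤ c.1 := by
      rcases hv.1 with e | e <;> rcases hv'.1 with e' | e' <;> omega
    exact sep_coord2 hN (abs_re_sub_le_dist _ _) hb₁.1 hb₁.2.1 hb₂.1 hb₂.2.1 hgap
  · have hgap : c.2 + 2 ≤ c'.2 ∨ c'.2 + 2 ≤ c.2 := by
      rcases hv.2 with e | e <;> rcases hv'.2 with e' | e' <;> omega
    exact sep_coord2 hN (abs_im_sub_le_dist _ _) hb₁.2.2.1 hb₁.2.2.2 hb₂.2.2.1 hb₂.2.2.2 hgap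

lemma sep0succ {n p : ℕ} (hn : 5 ≤ n) (hp : 1 ≤ p) (hpn : 2 * p + 2 < n) {k : ℕ}
    {S₁ S₂ : Set ℂ} (h₁ : S₁ ∈ removedSq n p 0) (h₂ : S₂ ∈ removedSq n p (k + 1))
    {z w : ℂ} (hz : z ∈ S₁) (hw : w ∈ S₂) : 1 / (n:ℝ) ^ (k + 2) ≤ dist z w := by
  have hN : (0:ℝ) < n := by exact_mod_cast (by omega : 0 < n)
  obtain ⟨c, hc, rfl⟩ := mem_removedSq_zero h₁
  simp only [removedSq, Set.mem_setOf_eq] at h₂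
  obtain ⟨ij, hij, C₀, hC₀, rfl⟩ := h₂
  obtain ⟨z', hz', rfl⟩ := hz
  obtain ⟨w', hw', rfl⟩ := hw
  have hm := margin hn hp hpn k C₀ hC₀ w' hw'
  have hb₁ := cell_bounds hN c (sq01_bounds hz')
  have hb₂ := cell_bounds hN ij hm
  have hcic : c ≠ ij := by
    rintro rfl
    exact hij.2.2 (by rcases hc with rfl | rfl | rfl | rfl <;> simp)
  have hcoord : c.1 ≠ ij.1 ∨ c.2 ≠ ij.2 := by
    by_contra hcon; push_neg at hcon; exact hcic (Prod.ext hcon.1 hcon.2)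
  have hm2 : (0:ℝ) ≤ 1 / (n:ℝ) ^ (k + 1) := by positivity
  have key : ((0:ℝ) + 1 / (n:ℝ) ^ (k + 1)) / n ≤ dist (Tmap n c z') (Tmap n ij w') := by
    rcases hcoord with h | h
    · exact sep_coord hN le_rfl hm2 (abs_re_sub_le_dist _ _) hb₁.1 hb₁.2.1 hb₂.1 hb₂.2.1 h
    · exact sep_coord hN le_rfl hm2 (abs_im_sub_le_dist _ _) hb₁.2.2.1 hb₁.2.2.2 hb₂.2.2.1
        hb₂.2.2.2 h
  have he : ((0:ℝ) + 1 / (n:ℝ) ^ (k + 1)) / n = 1 / (n:ℝ) ^ (k + 2) := by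
    rw [zero_add, div_div, ← pow_succ]
  rwa [he] at key

lemma sep {n p : ℕ} (hn : 5 ≤ n) (hp : 1 ≤ p) (hpn : 2 * p + 2 < n) :
    ∀ K k₁ k₂, k₁ + k₂ ≤ K → ∀ S₁ ∈ removedSq n p k₁, ∀ S₂ ∈ removedSq n p k₂, S₁ ≠ S₂ →
    ∀ z ∈ S₁, ∀ w ∈ S₂,
      min (1 / (n:ℝ) ^ (k₁ + 1)) (1 / (n:ℝ) ^ (k₂ + 1)) ≤ dist z w := by
  have hN : (0:ℝ) < n := by exact_mod_cast (by omega : 0 < n)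
  intro K
  induction K with
  | zero =>
    intro k₁ k₂ hK S₁ h₁ S₂ h₂ hne z hz w hw
    have e1 : k₁ = 0 := by omega
    have e2 : k₂ = 0 := by omega
    subst e1; subst e2
    have := sep00 hn hp hpn h₁ h₂ hne hz hw
    simpa using this
  | succ K IH =>
    intro k₁ k₂ hK S₁ h₁ S₂ h₂ hne z hz w hw
    cases k₁ with
    | zero =>
      cases k₂ with
      | zero =>
        have := sep00 hn hp hpn h₁ h₂ hne hz hw
        simpa using this
      | succ k₂' =>
        exact le_trans (min_le_right _ _) (sep0succ hn hp hpn h₁ h₂ hz hw)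
    | succ k₁' =>
      cases k₂ with
      | zero =>
        have := sep0succ hn hp hpn h₂ h₁ hw hz
        rw [dist_comm] at this
        exact le_trans (min_le_left _ _) this
      | succ k₂' =>
        simp only [removedSq, Set.mem_setOf_eq] at h₁ h₂
        obtain ⟨ij, hij, C₁, hC₁, rfl⟩ := h₁
        obtain ⟨ij', hij', C₂, hC₂, rfl⟩ := h₂
        obtain ⟨z', hz', rfl⟩ := hz
        obtain ⟨w', hw', rfl⟩ := hw
        have he₁ : 1 / (n:ℝ) ^ (k₁' + 1 + 1) = (1 / (n:ℝ) ^ (k₁' + 1)) / n := by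
          rw [pow_succ, ← div_div]
        have he₂ : 1 / (n:ℝ) ^ (k₂' + 1 + 1) = (1 / (n:ℝ) ^ (k₂' + 1)) / n := by
          rw [pow_succ, ← div_div]
        by_cases hcell : ij = ij'
        · subst hcell
          have hCne : C₁ ≠ C₂ := by rintro rfl; exact hne rfl
          have hd := IH k₁' k₂' (by omega) C₁ hC₁ C₂ hC₂ hCne z' hz' w' hw'
          rw [tmap_dist, he₁, he₂, min_div_div_right hN.le]
          exact (div_le_div_iff_of_pos_right hN).mpr hd
        · have hm₁ := margin hn hp hpn k₁' C₁ hC₁ z' hz'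
          have hm₂ := margin hn hp hpn k₂' C₂ hC₂ w' hw'
          have hb₁ := cell_bounds hN ij hm₁
          have hb₂ := cell_bounds hN ij' hm₂
          have hcoord : ij.1 ≠ ij'.1 ∨ ij.2 ≠ ij'.2 := by
            by_contra hcon; push_neg at hcon; exact hcell (Prod.ext hcon.1 hcon.2)
          have hp₁ : (0:ℝ) ≤ 1 / (n:ℝ) ^ (k₁' + 1) := by positivity
          have hp₂ : (0:ℝ) ≤ 1 / (n:ℝ) ^ (k₂' + 1) := by positivity
          have key : (1 / (n:ℝ) ^ (k₁' + 1) + 1 / (n:ℝ) ^ (k₂' + 1)) / n ≤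
              dist (Tmap n ij z') (Tmap n ij' w') := by
            rcases hcoord with h | h
            · exact sep_coord hN hp₁ hp₂ (abs_re_sub_le_dist _ _) hb₁.1 hb₁.2.1 hb₂.1 hb₂.2.1 h
            · exact sep_coord hN hp₁ hp₂ (abs_im_sub_le_dist _ _) hb₁.2.2.1 hb₁.2.2.2 hb₂.2.2.1
                hb₂.2.2.2 h
          refine le_trans ?_ key
          rw [he₁, he₂, min_div_div_right hN.le]
          exact (div_le_div_iff_of_pos_right hN).mpr (le_trans (min_le_left _ _) (by linarith))

lemma shape {n p : ℕ} (hn : 5 ≤ n) :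
    ∀ k, ∀ S ∈ removedSq n p k, ∃ a b : ℝ, ∀ z ∈ S,
      a ≤ z.re ∧ z.re ≤ a + 1 / (n:ℝ) ^ (k + 1) ∧
      b ≤ z.im ∧ z.im ≤ b + 1 / (n:ℝ) ^ (k + 1) := by
  have hN : (0:ℝ) < n := by exact_mod_cast (by omega : 0 < n)
  intro k
  induction k with
  | zero =>
    intro S hS
    obtain ⟨c, hc, rfl⟩ := mem_removedSq_zero hS
    refine ⟨(c.1:ℝ) / n, (c.2:ℝ) / n, ?_⟩
    rintro z ⟨z', hz', rfl⟩
    have e : ((c.1:ℝ)) / n + 1 / (n:ℝ) ^ (0 + 1) = ((c.1:ℝ) + 1) / n := by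
      rw [pow_one]; ring
    have e' : ((c.2:ℝ)) / n + 1 / (n:ℝ) ^ (0 + 1) = ((c.2:ℝ) + 1) / n := by
      rw [pow_one]; ring
    rw [tmap_re, tmap_im, e, e']
    have h1 := hz'.1.1; have h2 := hz'.1.2; have h3 := hz'.2.1; have h4 := hz'.2.2
    exact ⟨(div_le_div_iff_of_pos_right hN).mpr (by linarith),
      (div_le_div_iff_of_pos_right hN).mpr (by linarith),
      (div_le_div_iff_of_pos_right hN).mpr (by linarith),
      (div_le_div_iff_of_pos_right hN).mpr (by linarith)⟩
  | succ k IH =>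
    intro S hS
    simp only [removedSq, Set.mem_setOf_eq] at hS
    obtain ⟨ij, hij, C₀, hC₀, rfl⟩ := hS
    obtain ⟨a, b, hab⟩ := IH C₀ hC₀
    refine ⟨(a + ij.1) / n, (b + ij.2) / n, ?_⟩
    rintro z ⟨z', hz', rfl⟩
    obtain ⟨h1, h2, h3, h4⟩ := hab z' hz'
    have e : (a + (ij.1:ℝ)) / n + 1 / (n:ℝ) ^ (k + 1 + 1) =
        (a + 1 / (n:ℝ) ^ (k + 1) + ij.1) / n := by
      rw [pow_succ, ← div_div]; ring
    have e' : (b + (ij.2:ℝ)) / n + 1 / (n:ℝ) ^ (k + 1 + 1) =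
        (b + 1 / (n:ℝ) ^ (k + 1) + ij.2) / n := by
      rw [pow_succ, ← div_div]; ring
    rw [tmap_re, tmap_im, e, e']
    exact ⟨(div_le_div_iff_of_pos_right hN).mpr (by linarith),
      (div_le_div_iff_of_pos_right hN).mpr (by linarith),
      (div_le_div_iff_of_pos_right hN).mpr (by linarith),
      (div_le_div_iff_of_pos_right hN).mpr (by linarith)⟩


lemma diam_bound {n p : ℕ} (hn : 5 ≤ n) (k : ℕ) (S : Set ℂ) (hS : S ∈ removedSq n p k) :
    EMetric.diam (frontier S) ≤ ENNReal.ofReal (Real.sqrt 2 * (1 / (n:ℝ) ^ (k + 1))) := by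
  obtain ⟨a, b, hab⟩ := shape (p := p) hn k S hS
  set L := 1 / (n:ℝ) ^ (k + 1) with hL
  have hL0 : 0 ≤ L := by positivity
  have hb : ∀ z ∈ S, ∀ w ∈ S, dist z w ≤ Real.sqrt 2 * L := by
    intro z hz w hw
    obtain ⟨a1, a2, a3, a4⟩ := hab z hz
    obtain ⟨b1, b2, b3, b4⟩ := hab w hw
    rw [Complex.dist_eq, Complex.norm_def, Complex.normSq_apply]
    have hsq : (z - w).re * (z - w).re + (z - w).im * (z - w).im ≤ 2 * L ^ 2 := by
      simp only [Complex.sub_re, Complex.sub_im]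
      nlinarith
    calc Real.sqrt ((z - w).re * (z - w).re + (z - w).im * (z - w).im)
        ≤ Real.sqrt (2 * L ^ 2) := Real.sqrt_le_sqrt hsq
      _ = Real.sqrt 2 * L := by
          rw [Real.sqrt_mul (by norm_num), Real.sqrt_sq hL0]
  calc EMetric.diam (frontier S) ≤ EMetric.diam (closure S) :=
        EMetric.diam_mono frontier_subset_closure
    _ = EMetric.diam S := EMetric.diam_closure (α := ℂ) (s := S)
    _ ≤ ENNReal.ofReal (Real.sqrt 2 * L) := EMetric.diam_le (fun z hz w hw => by
        rw [edist_dist]; exact ENNReal.ofReal_le_ofReal (hb z hz w hw))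

end CarpetSep

set_option maxHeartbeats 1000000 in
/-- Any two distinct peripheral squares of `F_{n,p}` (boundaries
of removed squares, of side lengths `1/n^{k₁+1}` and `1/n^{k₂+1}`) satisfy
`dist(C₁, C₂) ≥ min{ℓ(C₁), ℓ(C₂)}`, and consequently
`dist(C₁, C₂) ≥ (1/√2)·min{diam C₁, diam C₂}`: the peripheral circles of
`F_{n,p}` are uniformly relatively separated with constant `δ = 1/√2`. -/
theorem removedSq_uniformly_relatively_separated (n p : ℕ) (hn : 5 ≤ n)
    (hp : 1 ≤ p) (hpn : 2 * p + 2 < n) (k₁ k₂ : ℕ) (S₁ S₂ : Set ℂ)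
    (h₁ : S₁ ∈ removedSq n p k₁) (h₂ : S₂ ∈ removedSq n p k₂) (hne : S₁ ≠ S₂) :
    ENNReal.ofReal (min (1 / (n : ℝ) ^ (k₁ + 1)) (1 / (n : ℝ) ^ (k₂ + 1))) ≤
      setEDist (frontier S₁) (frontier S₂) ∧
    ENNReal.ofReal (1 / Real.sqrt 2) *
        min (EMetric.diam (frontier S₁)) (EMetric.diam (frontier S₂)) ≤
      setEDist (frontier S₁) (frontier S₂) := by
  have hN : (0:ℝ) < n := by exact_mod_cast (by omega : 0 < n)
  have hsep : ∀ z ∈ S₁, ∀ w ∈ S₂,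
      min (1 / (n:ℝ) ^ (k₁ + 1)) (1 / (n:ℝ) ^ (k₂ + 1)) ≤ dist z w := fun z hz w hw =>
    CarpetSep.sep hn hp hpn (k₁ + k₂) k₁ k₂ le_rfl S₁ h₁ S₂ h₂ hne z hz w hw
  have hclos : ∀ z ∈ closure S₁, ∀ w ∈ closure S₂,
      min (1 / (n:ℝ) ^ (k₁ + 1)) (1 / (n:ℝ) ^ (k₂ + 1)) ≤ dist z w := by
    have hsub : closure S₁ ×ˢ closure S₂ ⊆
        {q : ℂ × ℂ | min (1 / (n:ℝ) ^ (k₁ + 1)) (1 / (n:ℝ) ^ (k₂ + 1)) ≤ dist q.1 q.2} := by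
      rw [← closure_prod_eq]
      refine closure_minimal ?_
        (isClosed_le continuous_const (Continuous.dist continuous_fst continuous_snd))
      rintro ⟨z, w⟩ ⟨hz, hw⟩
      exact hsep z hz w hw
    intro z hz w hw
    exact hsub (Set.mk_mem_prod hz hw)
  have part1 : ENNReal.ofReal (min (1 / (n:ℝ) ^ (k₁ + 1)) (1 / (n:ℝ) ^ (k₂ + 1))) ≤
      setEDist (frontier S₁) (frontier S₂) := by
    rw [setEDist]
    refine le_iInf fun a => le_iInf fun b => ?_
    rw [edist_dist]
    exact ENNReal.ofReal_le_ofReal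
      (hclos a (frontier_subset_closure a.2) b (frontier_subset_closure b.2))
  refine ⟨part1, ?_⟩
  have d₁ := CarpetSep.diam_bound (p := p) hn k₁ S₁ h₁
  have d₂ := CarpetSep.diam_bound (p := p) hn k₂ S₂ h₂
  have hmono : Monotone ENNReal.ofReal := fun _ _ h => ENNReal.ofReal_le_ofReal h
  have hs2 : (0:ℝ) < Real.sqrt 2 := Real.sqrt_pos.mpr (by norm_num)
  calc ENNReal.ofReal (1 / Real.sqrt 2) *
        min (EMetric.diam (frontier S₁)) (EMetric.diam (frontier S₂))
      ≤ ENNReal.ofReal (1 / Real.sqrt 2) *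
        min (ENNReal.ofReal (Real.sqrt 2 * (1 / (n:ℝ) ^ (k₁ + 1))))
          (ENNReal.ofReal (Real.sqrt 2 * (1 / (n:ℝ) ^ (k₂ + 1)))) :=
        mul_le_mul_right (min_le_min d₁ d₂) _
    _ = ENNReal.ofReal (1 / Real.sqrt 2) *
        ENNReal.ofReal (min (Real.sqrt 2 * (1 / (n:ℝ) ^ (k₁ + 1)))
          (Real.sqrt 2 * (1 / (n:ℝ) ^ (k₂ + 1)))) := by
        rw [hmono.map_min]
    _ = ENNReal.ofReal ((1 / Real.sqrt 2) * min (Real.sqrt 2 * (1 / (n:ℝ) ^ (k₁ + 1)))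
          (Real.sqrt 2 * (1 / (n:ℝ) ^ (k₂ + 1)))) :=
        (ENNReal.ofReal_mul (by positivity)).symm
    _ = ENNReal.ofReal (min (1 / (n:ℝ) ^ (k₁ + 1)) (1 / (n:ℝ) ^ (k₂ + 1))) := by
        congr 1
        rw [← mul_min_of_nonneg _ _ hs2.le, ← mul_assoc, one_div,
          inv_mul_cancel₀ hs2.ne', one_mul]
    _ ≤ setEDist (frontier S₁) (frontier S₂) := part1

end
end
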